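/- Let Q be a set of points and S a set of points in the Euclidean plane, let p ∈ Q and q' ∈ S, and assume that dist(p, q') ≤ dist(r, z) for every r ∈ Q and every z ∈ S (i.e., the pair (p, q') realizes the minimum distance between Q and S). Then for every point w in the segment [q', p] and every r ∈ Q one has dist(w, p) ≤ dist(w, r); that is, p is a nearest point of Q to every point of the segment joining q' to p. -/
import Mathlib

/-- If the pair `(p, q')` realizes the minimum distance between the sets `Q` and `S`
in the Euclidean plane, then `p` is a nearest point of `Q` to every point of the
segment joining `q'` to `p`. -/
theorem closest_pair_segment_nearest
    (Q S : Set (EuclideanSpace ℝ (Fin 2)))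
    (p q' : EuclideanSpace ℝ (Fin 2)) (hp : p ∈ Q) (hq' : q' ∈ S)
    (hmin : ∀ r ∈ Q, ∀ z ∈ S, dist p q' ≤ dist r z) :
    ∀ w ∈ segment ℝ q' p, ∀ r ∈ Q, dist w p ≤ dist w r := by
  intro w hw r hr
  have h1 : dist q' w + dist w p = dist q' p := dist_add_dist_of_mem_segment hw
  have h2 : dist p q' ≤ dist r q' := hmin r hr q' hq'
  have h3 : dist r q' ≤ dist r w + dist w q' := dist_triangle r w q'
  have := dist_comm p q' ▸ h2
  rw [dist_comm w q'] at h3; rw [dist_comm r w] at h3; linarith
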